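/- For θ ∈ ℝ³ with 0 < |θ| < 2π, the 3×3 left Jacobian J(θ^∧) = Σ_{i≥0} (θ^∧)^i/(i+1)! equals (sin|θ|/|θ|) I + (1 − sin|θ|/|θ|) θθᵀ/|θ|² + ((1 − cos|θ|)/|θ|²) θ^∧. -/

import Mathlib

/-- The hat map on `ℝ³`. -/
def hat (θ : Fin 3 → ℝ) : Matrix (Fin 3) (Fin 3) ℝ :=
  !![0, -θ 2, θ 1; θ 2, 0, -θ 0; -θ 1, θ 0, 0]

/-- `J(M) = ∑_{k≥0} M^k/(k+1)!`. -/
noncomputable def Jmat (M : Matrix (Fin 3) (Fin 3) ℝ) : Matrix (Fin 3) (Fin 3) ℝ :=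
  ∑' k : ℕ, (((k + 1).factorial : ℝ))⁻¹ • M ^ k

/-- For `θ ∈ ℝ³` with `0 < |θ| < 2π`, the left Jacobian satisfies
`J(θ^∧) = (sin|θ|/|θ|) I + (1 − sin|θ|/|θ|) θθᵀ/|θ|² + ((1 − cos|θ|)/|θ|²) θ^∧`. -/
theorem left_jacobian_closed_form (θ : Fin 3 → ℝ)
    (h0 : 0 < Real.sqrt (∑ i, θ i ^ 2))
    (h2π : Real.sqrt (∑ i, θ i ^ 2) < 2 * Real.pi) :
    Jmat (hat θ)
      = (Real.sin (Real.sqrt (∑ i, θ i ^ 2)) / Real.sqrt (∑ i, θ i ^ 2)) •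
          (1 : Matrix (Fin 3) (Fin 3) ℝ)
        + ((1 - Real.sin (Real.sqrt (∑ i, θ i ^ 2)) / Real.sqrt (∑ i, θ i ^ 2))
            / (Real.sqrt (∑ i, θ i ^ 2)) ^ 2) • Matrix.vecMulVec θ θ
        + ((1 - Real.cos (Real.sqrt (∑ i, θ i ^ 2))) / (Real.sqrt (∑ i, θ i ^ 2)) ^ 2) •
            hat θ := by
  set s : ℝ := ∑ i, θ i ^ 2 with hs
  set t : ℝ := Real.sqrt s with ht
  have hs0 : 0 ≤ s := Finset.sum_nonneg fun i _ => sq_nonneg _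
  have ht2 : t ^ 2 = s := Real.sq_sqrt hs0
  have ht0 : t ≠ 0 := ne_of_gt h0
  have hsne : s ≠ 0 := by rw [← ht2]; positivity
  set M : Matrix (Fin 3) (Fin 3) ℝ := hat θ with hM
  have hM3 : M ^ 3 = (-s) • M := by
    ext i j
    fin_cases i <;> fin_cases j <;>
      simp [hM, hat, hs, pow_succ, Matrix.mul_apply, Fin.sum_univ_three] <;> ring
  have hM2 : M * M = Matrix.vecMulVec θ θ - s • (1 : Matrix (Fin 3) (Fin 3) ℝ) := by
    ext i j
    fin_cases i <;> fin_cases j <;>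
      simp [hM, hat, hs, Matrix.mul_apply, Matrix.vecMulVec, Fin.sum_univ_three,
        Matrix.one_apply] <;> ring
  have podd : ∀ k : ℕ, M ^ (2 * k + 1) = ((-1 : ℝ) ^ k * s ^ k) • M := by
    intro k
    induction k with
    | zero => simp
    | succ n ih =>
        have h1 : 2 * (n + 1) + 1 = (2 * n + 1) + 2 := by ring
        rw [h1, pow_add, ih, Algebra.smul_mul_assoc]
        have h2 : M * M ^ 2 = M ^ 3 := (pow_succ' M 2).symm
        rw [h2, hM3, smul_smul]
        congr 1
        ring
  have peven : ∀ k : ℕ, M ^ (2 * k + 2) = ((-1 : ℝ) ^ k * s ^ k) • (M * M) := by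
    intro k
    have : 2 * k + 2 = (2 * k + 1) + 1 := rfl
    rw [this, pow_succ, podd k, Algebra.smul_mul_assoc]
  -- scalar series
  have hcos : HasSum (fun k : ℕ => (((2 * k + 2).factorial : ℝ))⁻¹ * ((-1 : ℝ) ^ k * s ^ k))
      ((1 - Real.cos t) / s) := by
    have h := Real.hasSum_cos t
    have h1 : HasSum (fun k : ℕ => (-1 : ℝ) ^ (k + 1) * t ^ (2 * (k + 1)) / ((2 * (k + 1)).factorial))
        (Real.cos t - 1) := by
      refine (hasSum_nat_add_iff (f := fun n : ℕ => (-1 : ℝ) ^ n * t ^ (2 * n) / ((2 * n).factorial)) 1).mpr ?_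
      simpa using h
    have h2 := (h1.neg).div_const s
    convert h2 using 2 with k
    · rfl
    · have : t ^ (2 * (k + 1)) = s ^ k * s := by
        rw [pow_mul, ht2, ← pow_succ]
      rw [this]
      field_simp
      ring
    · ring
  have hsin : HasSum (fun k : ℕ => (((2 * k + 3).factorial : ℝ))⁻¹ * ((-1 : ℝ) ^ k * s ^ k))
      ((t - Real.sin t) / (s * t)) := by
    have h := Real.hasSum_sin t
    have h1 : HasSum (fun k : ℕ => (-1 : ℝ) ^ (k + 1) * t ^ (2 * (k + 1) + 1) / ((2 * (k + 1) + 1).factorial))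
        (Real.sin t - t) := by
      refine (hasSum_nat_add_iff (f := fun n : ℕ => (-1 : ℝ) ^ n * t ^ (2 * n + 1) / ((2 * n + 1).factorial)) 1).mpr ?_
      simpa using h
    have h2 := (h1.neg).div_const (s * t)
    convert h2 using 2 with k
    · rfl
    · have h1 : t ^ (2 * (k + 1) + 1) = (t ^ 2) ^ (k + 1) * t := by ring
      have h2 : t ^ (2 * (k + 1) + 1) = s ^ k * (s * t) := by
        rw [h1, ht2]; ring
      have h23 : 2 * (k + 1) + 1 = 2 * k + 3 := by ring
      rw [h23] at h2 ⊢
      rw [h2]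
      have hst : (s * t) ≠ 0 := mul_ne_zero hsne ht0
      field_simp
      ring
    · ring
  -- matrix series
  set f : ℕ → Matrix (Fin 3) (Fin 3) ℝ := fun n => (((n + 1).factorial : ℝ))⁻¹ • M ^ n with hf
  set A : ℝ := (1 - Real.cos t) / s with hA
  set B : ℝ := (t - Real.sin t) / (s * t) with hB
  have hodd : HasSum (fun k : ℕ => f (2 * k + 1)) (A • M) := by
    have := hcos.smul_const M
    convert this using 2 with k
    rw [hf]
    simp only [podd k, smul_smul]
  have heven2 : HasSum (fun k : ℕ => f (2 * (k + 1))) (B • (M * M)) := by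
    have := hsin.smul_const (M * M)
    convert this using 2 with k
    rw [hf]
    have h22 : 2 * (k + 1) = 2 * k + 2 := by ring
    simp only [h22, peven k, smul_smul]
  have heven : HasSum (fun k : ℕ => f (2 * k)) (B • (M * M) + 1) := by
    have h2 := (hasSum_nat_add_iff (f := fun k : ℕ => f (2 * k)) 1).mp heven2
    convert h2 using 2
    · rfl
    rw [hf]
    simp
  have htotal : HasSum f (B • (M * M) + 1 + A • M) := heven.even_add_odd hodd
  have hJ : Jmat (hat θ) = B • (M * M) + 1 + A • M := by
    rw [Jmat, ← hM]
    exact htotal.tsum_eq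
  rw [hJ, hM2]
  -- final algebra
  have e2 : (1 - Real.sin t / t) / t ^ 2 = B := by
    rw [hB, ← ht2]
    rw [div_eq_div_iff (by positivity) (by positivity)]
    field_simp
  have e1 : Real.sin t / t = 1 - B * s := by
    rw [hB, ← ht2]
    field_simp
    ring
  have e3 : (1 - Real.cos t) / t ^ 2 = A := by
    rw [hA, ht2]
  rw [e2, e1, e3, smul_sub]
  module
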